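/- arXiv:1608.03336 — 3 statements merged into one kernel-verified Lean document; each statement's English description precedes it below -/
import Mathlib

section
/- Let G be a group with trivial center such that the image of the canonical embedding G → Aut(G) (by conjugation) is a characteristic subgroup of Aut(G). Then every automorphism of Aut(G) is inner, i.e. Out(Aut(G)) is trivial. -/
/-- Burnside: if a centerless group `G` is characteristic (as `Inn G = range of conj`)
in `Aut G`, then every automorphism of `Aut G` is inner. -/
theorem stmt_0 (G : Type*) [Group G] (hZ : Subgroup.center G = ⊥)
    (hchar : ((MulAut.conj : G →* MulAut G).range).Characteristic) :
    ∀ φ : MulAut (MulAut G), ∃ ψ : MulAut G, ∀ θ : MulAut G, φ θ = ψ * θ * ψ⁻¹ := by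
  -- conj is injective
  have hinj : Function.Injective (MulAut.conj : G →* MulAut G) := by
    rw [injective_iff_map_eq_one]
    intro a ha
    have hc : a ∈ Subgroup.center G := by
      rw [Subgroup.mem_center_iff]
      intro g
      have h := DFunLike.congr_fun ha g
      simp only [MulAut.conj_apply, MulAut.one_apply] at h
      calc g * a = (a * g * a⁻¹) * a := by rw [h]
        _ = a * g := by group
    rw [hZ] at hc
    simpa using hc
  -- any automorphism of Aut G maps range conj into range conj
  have key : ∀ (ψ : MulAut (MulAut G)) (g : G),
      ψ (MulAut.conj g) ∈ (MulAut.conj : G →* MulAut G).range := by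
    intro ψ g
    have h := hchar.fixed ψ
    have : MulAut.conj g ∈ ((MulAut.conj : G →* MulAut G).range).comap ψ.toMonoidHom := by
      rw [h]; exact ⟨g, rfl⟩
    simpa [Subgroup.mem_comap] using this
  intro φ
  -- the induced map on G
  let f : MulAut (MulAut G) → G → G := fun ψ g => (key ψ g).choose
  have hf : ∀ (ψ : MulAut (MulAut G)) (g : G),
      (MulAut.conj : G →* MulAut G) (f ψ g) = ψ (MulAut.conj g) :=
    fun ψ g => (key ψ g).choose_spec
  -- f φ is an automorphism
  have hli : ∀ g, f φ⁻¹ (f φ g) = g := by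
    intro g
    apply hinj
    rw [hf, hf]
    simp
  have hri : ∀ g, f φ (f φ⁻¹ g) = g := by
    intro g
    apply hinj
    rw [hf, hf]
    simp
  have hmul : ∀ a b : G, f φ (a * b) = f φ a * f φ b := by
    intro a b
    apply hinj
    rw [map_mul, hf, hf, hf, map_mul, map_mul]
  let σ : MulAut G :=
    { toFun := f φ
      invFun := f φ⁻¹
      left_inv := hli
      right_inv := hri
      map_mul' := hmul }
  refine ⟨σ, fun θ => ?_⟩
  -- key computation: conj (θ g) = θ * conj g * θ⁻¹
  have hconjθ : ∀ (θ : MulAut G) (g : G),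
      (MulAut.conj : G →* MulAut G) (θ g) = θ * MulAut.conj g * θ⁻¹ := by
    intro θ g
    ext x
    simp [MulAut.conj_apply, mul_assoc]
  have hfσ : ∀ g : G, (MulAut.conj : G →* MulAut G) (σ g) = φ (MulAut.conj g) := hf φ
  have main : ∀ g : G, (φ θ) (σ g) = σ (θ g) := by
    intro g
    apply hinj
    rw [hconjθ (φ θ) (σ g), hfσ g, ← map_inv φ θ, ← map_mul, ← map_mul, ← hconjθ, hfσ]
  ext x
  have := main (σ.symm x)
  simp only [MulEquiv.apply_symm_apply] at this
  exact this
end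

section
/- Let G be a group with trivial center. If Inn(G) is characteristic in Aut(G), then for every φ ∈ Aut(Aut(G)) there exists a unique automorphism φ̄ of G such that φ(i(g)) = i(φ̄(g)) for all g ∈ G, where i: G → Aut(G) is the conjugation embedding. -/
/-- If `G` is centerless and `Inn G` is characteristic in `Aut G`, then every automorphism
`φ` of `Aut G` restricts to a unique automorphism `φ̄` of `G` along the conjugation embedding. -/
theorem stmt_1 (G : Type*) [Group G] (hZ : Subgroup.center G = ⊥)
    (hchar : ((MulAut.conj : G →* MulAut G).range).Characteristic) :
    ∀ φ : MulAut (MulAut G), ∃! φbar : MulAut G,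
      ∀ g : G, φ (MulAut.conj g) = MulAut.conj (φbar g) := by
  intro φ
  have hinj : Function.Injective (MulAut.conj : G →* MulAut G) := by
    intro a b hab
    have : a * b⁻¹ ∈ Subgroup.center G := by
      rw [Subgroup.mem_center_iff]
      intro g
      have := congrArg (fun ψ : MulAut G => ψ (b⁻¹ * g * b)) hab
      simp only [MulAut.conj_apply] at this
      have h2 : a * (b⁻¹ * g * b) * a⁻¹ = g := by
        simpa [MulAut.conj_apply, mul_assoc] using this
      calc g * (a * b⁻¹) = a * (b⁻¹ * g * b) * a⁻¹ * (a * b⁻¹) := by rw [h2]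
        _ = a * b⁻¹ * g := by group
    rw [hZ, Subgroup.mem_bot] at this
    exact mul_inv_eq_one.mp this
  set R := (MulAut.conj : G →* MulAut G).range with hR
  have hmap : R.map φ.toMonoidHom = R :=
    (Subgroup.characteristic_iff_map_eq).mp hchar φ
  let e : G ≃* R := MonoidHom.ofInjective hinj
  let ψ : R ≃* R := (φ.subgroupMap R).trans (MulEquiv.subgroupCongr hmap)
  refine ⟨e.trans (ψ.trans e.symm), ?_, ?_⟩
  · intro g
    have key : (MulAut.conj : G →* MulAut G) (e.symm (ψ (e g))) = (ψ (e g) : MulAut G) :=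
      MonoidHom.apply_ofInjective_symm hinj _
    have heg : ((e g : R) : MulAut G) = MulAut.conj g := rfl
    have hψ : ((ψ (e g) : R) : MulAut G) = φ (MulAut.conj g) := by
      simp [ψ, MulEquiv.subgroupCongr_apply, heg]; rfl
    simp only [MulEquiv.trans_apply]
    rw [← hψ, ← key]
  · intro χ hχ
    ext g
    apply hinj
    have h1 : φ (MulAut.conj g) = MulAut.conj (χ g) := hχ g
    have key : (MulAut.conj : G →* MulAut G) (e.symm (ψ (e g))) = (ψ (e g) : MulAut G) :=
      MonoidHom.apply_ofInjective_symm hinj _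
    have hψ : ((ψ (e g) : R) : MulAut G) = φ (MulAut.conj g) := by
      simp [ψ, MulEquiv.subgroupCongr_apply]; rfl
    show (MulAut.conj : G →* MulAut G) (χ g) = _
    rw [← h1, ← hψ]
    simp only [MulEquiv.trans_apply]
    exact key.symm
end

section
/- Let Γ be a group and let Λ = ⊕_{i≥1} γ_i(Γ)/γ_{i+1}(Γ) be the associated graded Lie ring of the lower central series, with bracket induced by commutators. If the center of Λ is trivial, then for every k ≥ 1 the center of Γ/γ_{k+1}(Γ) equals γ_k(Γ)/γ_{k+1}(Γ). -/
open Subgroup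

open scoped commutatorElement

/-- Three subgroups lemma with a normal subgroup as target. -/
lemma three_subgroups {G : Type*} [Group G] {H₁ H₂ H₃ N : Subgroup G} [N.Normal]
    (h1 : ⁅⁅H₂, H₃⁆, H₁⁆ ≤ N) (h2 : ⁅⁅H₃, H₁⁆, H₂⁆ ≤ N) : ⁅⁅H₁, H₂⁆, H₃⁆ ≤ N := by
  let f := QuotientGroup.mk' N
  have key : ∀ {K : Subgroup G}, K ≤ N ↔ K.map f = ⊥ := by
    intro K
    rw [Subgroup.map_eq_bot_iff, QuotientGroup.ker_mk']
  rw [key] at h1 h2 ⊢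
  rw [map_commutator, map_commutator] at h1 h2 ⊢
  exact commutator_commutator_eq_bot_of_rotate h1 h2

lemma lcs_comm (G : Type*) [Group G] (j i : ℕ) :
    ⁅(⊤ : Subgroup G).lowerCentralSeries i, (⊤ : Subgroup G).lowerCentralSeries j⁆ ≤ (⊤ : Subgroup G).lowerCentralSeries (i + j + 1) := by
  induction j generalizing i with
  | zero =>
      have h0 : (⊤ : Subgroup G).lowerCentralSeries 0 = (⊤ : Subgroup G) := rfl
      rw [h0]
      exact le_of_eq rfl
  | succ j ih =>
      have h3 : ⁅⁅(⊤ : Subgroup G).lowerCentralSeries j, (⊤ : Subgroup G)⁆, (⊤ : Subgroup G).lowerCentralSeries i⁆ ≤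
          (⊤ : Subgroup G).lowerCentralSeries (i + (j + 1) + 1) := by
        apply three_subgroups
        · have : ⁅(⊤ : Subgroup G), (⊤ : Subgroup G).lowerCentralSeries i⁆ ≤ (⊤ : Subgroup G).lowerCentralSeries (i + 1) := by
            rw [commutator_comm]; exact le_of_eq rfl
          refine le_trans (commutator_mono this le_rfl) ?_
          have := ih (i + 1)
          convert this using 2
          omega
        · refine le_trans (commutator_mono (ih i) le_top) ?_
          have : ⁅(⊤ : Subgroup G).lowerCentralSeries (i + j + 1), (⊤ : Subgroup G)⁆ =
              (⊤ : Subgroup G).lowerCentralSeries (i + j + 2) := rfl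
          rw [this]
          apply Subgroup.lowerCentralSeries_antitone _; omega
      calc ⁅(⊤ : Subgroup G).lowerCentralSeries i, (⊤ : Subgroup G).lowerCentralSeries (j + 1)⁆
          ≤ ⁅(⊤ : Subgroup G).lowerCentralSeries (j + 1), (⊤ : Subgroup G).lowerCentralSeries i⁆ := commutator_comm_le _ _
        _ ≤ (⊤ : Subgroup G).lowerCentralSeries (i + (j + 1) + 1) := h3

/-- If the associated graded Lie ring `Λ = ⊕ γ_i(Γ)/γ_{i+1}(Γ)` of the lower central series
has trivial center (expressed at the level of the group: any `x ∈ γ_{i+1}(Γ)` whose group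
commutators with all of `γ_{j+1}(Γ)` land in `γ_{i+j+3}(Γ)` must lie in `γ_{i+2}(Γ)`; here
`(⊤ : Subgroup Γ).lowerCentralSeries i = γ_{i+1}(Γ)`), then for every `k ≥ 1` the center of
`Γ/γ_{k+1}(Γ)` is exactly `γ_k(Γ)/γ_{k+1}(Γ)`. -/
theorem stmt_10 (Γ : Type*) [Group Γ]
    (hcenterless : ∀ i : ℕ, ∀ x ∈ (⊤ : Subgroup Γ).lowerCentralSeries i,
      (∀ j : ℕ, ∀ y ∈ (⊤ : Subgroup Γ).lowerCentralSeries j, ⁅x, y⁆ ∈ (⊤ : Subgroup Γ).lowerCentralSeries (i + j + 2)) →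
        x ∈ (⊤ : Subgroup Γ).lowerCentralSeries (i + 1)) :
    ∀ k : ℕ, 1 ≤ k → ∀ x : Γ,
      ((QuotientGroup.mk x : Γ ⧸ (⊤ : Subgroup Γ).lowerCentralSeries k) ∈
          Subgroup.center (Γ ⧸ (⊤ : Subgroup Γ).lowerCentralSeries k) ↔
        x ∈ (⊤ : Subgroup Γ).lowerCentralSeries (k - 1)) := by
  intro k hk x
  constructor
  · intro hx
    -- H : preimage of the center
    set N := (⊤ : Subgroup Γ).lowerCentralSeries k with hN
    let H : Subgroup Γ := (Subgroup.center (Γ ⧸ N)).comap (QuotientGroup.mk' N)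
    have hxH : x ∈ H := hx
    have hH0 : ⁅H, (⊤ : Subgroup Γ)⁆ ≤ N := by
      rw [commutator_le]
      intro g hg y _
      have : (QuotientGroup.mk ⁅g, y⁆ : Γ ⧸ N) = 1 := by
        have hgc : (QuotientGroup.mk g : Γ ⧸ N) ∈ Subgroup.center _ := hg
        rw [Subgroup.mem_center_iff] at hgc
        show QuotientGroup.mk (g * y * g⁻¹ * y⁻¹) = 1
        have : ((QuotientGroup.mk (g * y * g⁻¹ * y⁻¹)) : Γ ⧸ N) =
            QuotientGroup.mk g * QuotientGroup.mk y * (QuotientGroup.mk g)⁻¹ *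
              (QuotientGroup.mk y)⁻¹ := by rfl
        rw [this, ← hgc (QuotientGroup.mk y)]
        group
      rwa [QuotientGroup.eq_one_iff] at this
    have hHj : ∀ j : ℕ, ⁅H, (⊤ : Subgroup Γ).lowerCentralSeries j⁆ ≤ (⊤ : Subgroup Γ).lowerCentralSeries (k + j) := by
      intro j
      induction j with
      | zero => simpa using hH0
      | succ j ih =>
          have h3 : ⁅⁅(⊤ : Subgroup Γ).lowerCentralSeries j, (⊤ : Subgroup Γ)⁆, H⁆ ≤ (⊤ : Subgroup Γ).lowerCentralSeries (k + (j + 1)) := by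
            apply three_subgroups
            · refine le_trans (commutator_mono (commutator_comm_le _ _) le_rfl) ?_
              refine le_trans (commutator_mono hH0 le_rfl) ?_
              refine le_trans (lcs_comm Γ j k) ?_
              apply Subgroup.lowerCentralSeries_antitone _; omega
            · have step : ⁅⁅H, (⊤ : Subgroup Γ).lowerCentralSeries j⁆, (⊤ : Subgroup Γ)⁆ ≤
                  ⁅(⊤ : Subgroup Γ).lowerCentralSeries (k + j), (⊤ : Subgroup Γ)⁆ :=
                commutator_mono ih le_rfl
              exact le_trans step (le_of_eq rfl)
          calc ⁅H, (⊤ : Subgroup Γ).lowerCentralSeries (j + 1)⁆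
              ≤ ⁅(⊤ : Subgroup Γ).lowerCentralSeries (j + 1), H⁆ := commutator_comm_le _ _
            _ ≤ (⊤ : Subgroup Γ).lowerCentralSeries (k + (j + 1)) := h3
    -- now bootstrap with hcenterless
    have main : ∀ i : ℕ, i ≤ k - 1 → x ∈ (⊤ : Subgroup Γ).lowerCentralSeries i := by
      intro i
      induction i with
      | zero => intro _; trivial
      | succ i ih =>
          intro hi
          apply hcenterless i x (ih (by omega))
          intro j y hy
          have h1 : ⁅x, y⁆ ∈ (⊤ : Subgroup Γ).lowerCentralSeries (k + j) :=
            hHj j (commutator_mem_commutator hxH hy)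
          exact Subgroup.lowerCentralSeries_antitone _ (by omega) h1
    exact main (k - 1) le_rfl
  · intro hx
    rw [Subgroup.mem_center_iff]
    intro g
    induction g using QuotientGroup.induction_on with
    | H y =>
        show QuotientGroup.mk (y * x) = QuotientGroup.mk (x * y)
        rw [QuotientGroup.eq]
        have : ⁅x⁻¹, y⁻¹⁆ ∈ (⊤ : Subgroup Γ).lowerCentralSeries k := by
          have hmem : ⁅x⁻¹, y⁻¹⁆ ∈ ⁅(⊤ : Subgroup Γ).lowerCentralSeries (k - 1), (⊤ : Subgroup Γ)⁆ :=
            commutator_mem_commutator (inv_mem hx) trivial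
          have : ⁅(⊤ : Subgroup Γ).lowerCentralSeries (k - 1), (⊤ : Subgroup Γ)⁆ =
              (⊤ : Subgroup Γ).lowerCentralSeries (k - 1 + 1) := rfl
          rw [this] at hmem
          have hkk : k - 1 + 1 = k := by omega
          rwa [hkk] at hmem
        have heq : (y * x)⁻¹ * (x * y) = ⁅x⁻¹, y⁻¹⁆ := by group
        rwa [heq]
end
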